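/- In the setting of the √n-approximation analysis: let π be a greedy individually rational assignment with active coalitions B_1,…,B_s (|B_1| ≥ … ≥ |B_s|) such that every nonempty individually rational coalition of agents unassigned by π is empty (greedy maximality), and let π* be any individually rational assignment with set of active coalitions 𝒞. Then every coalition C ∈ 𝒞 intersects some B_i, and if additionally |C| ≤ |B_1| for all C ∈ 𝒞, then #(π*) ≤ |B_1| · Σ_{i=1}^s |B_i| ≤ |B_1| · #(π). -/

import Mathlib

/-- A coalition C is individually rational when every member approves its size;
here S' i is the set of approved group sizes of agent i. -/
def IRCoal {ι : Type*} [DecidableEq ι] (S' : ι → Finset ℕ) (C : Finset ι) : Prop :=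
  ∀ i ∈ C, C.card ∈ S' i

/-- Core counting argument of the √n-approximation: let B 0, …, B (s-1) be the
(pairwise disjoint, individually rational) active coalitions of a greedy
assignment π, with non-increasing sizes, such that B 0 is a maximum-size
individually rational coalition and no nonempty individually rational coalition
disjoint from all the B i exists; let D 0, …, D (t-1) be the (pairwise disjoint,
nonempty, individually rational) active coalitions of any individually rational
assignment π*. Then every D k intersects some B i, and if moreover every D k
has size at most |B 0|, then #(π*) = Σ|D k| ≤ |B 0| · Σ|B i| = |B 0| · #(π). -/
theorem stmt11 (n s t : ℕ) (hs : 0 < s) (S' : Fin n → Finset ℕ)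
    (B : Fin s → Finset (Fin n)) (D : Fin t → Finset (Fin n))
    (hBdisj : ∀ i j, i ≠ j → Disjoint (B i) (B j))
    (hBIR : ∀ i, IRCoal S' (B i))
    (hBanti : ∀ i j : Fin s, i ≤ j → (B j).card ≤ (B i).card)
    (hmax : ∀ C : Finset (Fin n), IRCoal S' C → (∀ i, Disjoint C (B i)) → C = ∅)
    (hB0 : ∀ C : Finset (Fin n), IRCoal S' C → C.card ≤ (B ⟨0, hs⟩).card)
    (hDdisj : ∀ k l, k ≠ l → Disjoint (D k) (D l))
    (hDIR : ∀ k, IRCoal S' (D k))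
    (hDne : ∀ k, (D k).Nonempty) :
    (∀ k, ∃ i, ((D k) ∩ (B i)).Nonempty) ∧
      ((∀ k, (D k).card ≤ (B ⟨0, hs⟩).card) →
        ∑ k, (D k).card ≤ (B ⟨0, hs⟩).card * ∑ i, (B i).card) := by
  have h1 : ∀ k, ∃ i, ((D k) ∩ (B i)).Nonempty := by
    intro k
    by_contra h
    push_neg at h
    have hd : ∀ i, Disjoint (D k) (B i) := by
      intro i
      rw [Finset.disjoint_iff_inter_eq_empty]
      exact h i
    exact absurd (hmax (D k) (hDIR k) hd) (Finset.nonempty_iff_ne_empty.mp (hDne k))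
  refine ⟨h1, fun hle => ?_⟩
  choose i hi using h1
  choose x hx using hi
  have hinj : Function.Injective x := by
    intro k l hkl
    by_contra hne
    have hdisj := hDdisj k l hne
    have hxk := (Finset.mem_inter.mp (hx k)).1
    have hxl := (Finset.mem_inter.mp (hx l)).1
    rw [hkl] at hxk
    exact (Finset.disjoint_left.mp hdisj hxk) hxl
  have ht : t ≤ ∑ i, (B i).card := by
    have hc : (Finset.univ.image x).card ≤ (Finset.univ.biUnion B).card := by
      apply Finset.card_le_card
      intro y hy
      simp only [Finset.mem_image] at hy
      obtain ⟨k, _, rfl⟩ := hy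
      exact Finset.mem_biUnion.mpr ⟨i k, Finset.mem_univ _, (Finset.mem_inter.mp (hx k)).2⟩
    rw [Finset.card_image_of_injective _ hinj, Finset.card_univ, Fintype.card_fin] at hc
    exact le_trans hc Finset.card_biUnion_le
  calc ∑ k, (D k).card ≤ ∑ _k : Fin t, (B ⟨0, hs⟩).card :=
        Finset.sum_le_sum (fun k _ => hle k)
    _ = t * (B ⟨0, hs⟩).card := by
        simp [Finset.sum_const, Finset.card_univ]
    _ ≤ (B ⟨0, hs⟩).card * ∑ i, (B i).card := by
        rw [Nat.mul_comm]
        exact Nat.mul_le_mul_left _ ht
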